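/- arXiv:2503.24189 — 11 statements merged into one kernel-verified Lean document; each statement's English description precedes it below -/
import Mathlib

section
/- Let q ∈ ℂ with q ≠ 0 and q⁴ ≠ 1, and let ζ, ζ' ∈ ℂ× with ζ, ζ' ∉ {1, −1}. Let D := diag(1, q⁻², q⁻², q⁻⁴) as an endomorphism of ℂ²⊗ℂ². For an endomorphism φ of ℂ²⊗ℂ², the following are equivalent: (i) φ∘D = D∘φ, φ∘E(ζ,ζ') = E(ζ',ζ)∘φ, and φ∘F(ζ,ζ') = F(ζ',ζ)∘φ; (ii) there exists (a₁,a₂,b₁,b₂,c₁,c₂) ∈ ℂ⁶ satisfying the intertwining system such that φ = M(a₁,a₂,b₁,b₂,c₁,c₂). -/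
open Matrix

/-- The quantum bracket `[ζ] = (ζ - ζ⁻¹)/(q - q⁻¹)`. -/
noncomputable def qbr (q ζ : ℂ) : ℂ := (ζ - ζ⁻¹) / (q - q⁻¹)

/-- The endomorphism of `ℂ²⊗ℂ²` with Boltzmann weights `(a₁,a₂,b₁,b₂,c₁,c₂)`,
in the ordered basis `e₀⊗e₀, e₀⊗e₁, e₁⊗e₀, e₁⊗e₁` (columns are images of basis vectors). -/
def Mmat (a₁ a₂ b₁ b₂ c₁ c₂ : ℂ) : Matrix (Fin 4) (Fin 4) ℂ :=
  !![a₂, 0,  0,  0;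
     0,  c₂, b₁, 0;
     0,  b₂, c₁, 0;
     0,  0,  0,  a₁]

/-- The coproduct action of the generator `E` on `V(ζ)⊗V(ζ')` (with Koszul signs). -/
noncomputable def Emat (q ζ ζ' : ℂ) : Matrix (Fin 4) (Fin 4) ℂ :=
  !![0, qbr q ζ', qbr q ζ * ζ'⁻¹, 0;
     0, 0,        0,              qbr q ζ * ζ'⁻¹;
     0, 0,        0,              -qbr q ζ';
     0, 0,        0,              0]

/-- The coproduct action of the generator `F` on `V(ζ)⊗V(ζ')` (with Koszul signs). -/
def Fmat (ζ ζ' : ℂ) : Matrix (Fin 4) (Fin 4) ℂ :=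
  !![0, 0, 0,  0;
     ζ, 0, 0,  0;
     1, 0, 0,  0;
     0, 1, -ζ, 0]

/-- The matrix `diag(1, q⁻², q⁻², q⁻⁴)` (action of `K⊗K` suitably normalized). -/
noncomputable def Dmat (q : ℂ) : Matrix (Fin 4) (Fin 4) ℂ :=
  !![1, 0, 0, 0;
     0, (q ^ 2)⁻¹, 0, 0;
     0, 0, (q ^ 2)⁻¹, 0;
     0, 0, 0, (q ^ 4)⁻¹]

/-- The eight equations of the intertwining system. -/
noncomputable def IntSys (q ζ ζ' a₁ a₂ b₁ b₂ c₁ c₂ : ℂ) : Prop :=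
  qbr q ζ * c₂ + qbr q ζ' * ζ⁻¹ * b₂ = qbr q ζ' * a₂ ∧
  qbr q ζ * b₁ + ζ⁻¹ * qbr q ζ' * c₁ = qbr q ζ * ζ'⁻¹ * a₂ ∧
  qbr q ζ' * ζ⁻¹ * a₁ = ζ'⁻¹ * qbr q ζ * c₂ - qbr q ζ' * b₁ ∧
  -(qbr q ζ) * a₁ = ζ'⁻¹ * qbr q ζ * b₂ - qbr q ζ' * c₁ ∧
  a₂ = c₁ + ζ * b₂ ∧
  ζ' * a₂ = b₁ + ζ * c₂ ∧
  c₂ - ζ' * b₂ = a₁ ∧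
  b₁ - ζ' * c₁ = -(ζ * a₁)

private lemma key_aux {x u v : ℂ} (huv : u ≠ v) (h : x * u = v * x) : x = 0 := by
  have h2 : x * (u - v) = 0 := by linear_combination h
  rcases mul_eq_zero.1 h2 with h3 | h3
  · exact h3
  · exact absurd (sub_eq_zero.1 h3) huv

set_option maxHeartbeats 1000000 in
theorem stmt1 (q ζ ζ' : ℂ) (hq0 : q ≠ 0) (hq4 : q ^ 4 ≠ 1)
    (hζ0 : ζ ≠ 0) (hζ'0 : ζ' ≠ 0)
    (hζ1 : ζ ≠ 1) (hζm1 : ζ ≠ -1) (hζ'1 : ζ' ≠ 1) (hζ'm1 : ζ' ≠ -1)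
    (φ : Matrix (Fin 4) (Fin 4) ℂ) :
    (φ * Dmat q = Dmat q * φ ∧
     φ * Emat q ζ ζ' = Emat q ζ' ζ * φ ∧
     φ * Fmat ζ ζ' = Fmat ζ' ζ * φ) ↔
    (∃ a₁ a₂ b₁ b₂ c₁ c₂ : ℂ,
      IntSys q ζ ζ' a₁ a₂ b₁ b₂ c₁ c₂ ∧ φ = Mmat a₁ a₂ b₁ b₂ c₁ c₂) := by
  have hq2 : q ^ 2 ≠ 1 := by
    intro h
    exact hq4 (by rw [show q ^ 4 = (q ^ 2) ^ 2 by ring, h, one_pow])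
  have hq20 : q ^ 2 ≠ 0 := pow_ne_zero _ hq0
  have hq40 : q ^ 4 ≠ 0 := pow_ne_zero _ hq0
  have h2i : (q ^ 2)⁻¹ ≠ 1 := by
    intro h; exact hq2 (by field_simp at h; rw [h])
  have h4i : (q ^ 4)⁻¹ ≠ 1 := by
    intro h; exact hq4 (by field_simp at h; rw [h])
  have h42 : (q ^ 4)⁻¹ ≠ (q ^ 2)⁻¹ := by
    intro h
    apply hq2
    have h' : q ^ 2 = q ^ 4 := by
      have := congrArg (fun x => x * (q ^ 2 * q ^ 4)) h
      field_simp at this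
      linear_combination q ^ 2 * this
    have : q ^ 2 * (q ^ 2 - 1) = 0 := by linear_combination -h'
    rcases mul_eq_zero.1 this with h3 | h3
    · exact absurd h3 hq20
    · exact sub_eq_zero.1 h3
  constructor
  · rintro ⟨hD, hE, hF⟩
    have d01 := congrFun (congrFun hD 0) 1
    have d02 := congrFun (congrFun hD 0) 2
    have d03 := congrFun (congrFun hD 0) 3
    have d10 := congrFun (congrFun hD 1) 0
    have d20 := congrFun (congrFun hD 2) 0
    have d30 := congrFun (congrFun hD 3) 0
    have d13 := congrFun (congrFun hD 1) 3
    have d23 := congrFun (congrFun hD 2) 3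
    have d31 := congrFun (congrFun hD 3) 1
    have d32 := congrFun (congrFun hD 3) 2
    simp [Dmat, Matrix.vecHead, Matrix.vecTail, Matrix.mul_apply, Fin.sum_univ_four] at d01 d02 d03 d10 d20 d30 d13 d23 d31 d32
    have z01 : φ 0 1 = 0 := key_aux h2i (by linear_combination d01)
    have z02 : φ 0 2 = 0 := key_aux h2i (by linear_combination d02)
    have z03 : φ 0 3 = 0 := key_aux h4i (by linear_combination d03)
    have z10 : φ 1 0 = 0 := key_aux (Ne.symm h2i) (by linear_combination d10)
    have z20 : φ 2 0 = 0 := key_aux (Ne.symm h2i) (by linear_combination d20)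
    have z30 : φ 3 0 = 0 := key_aux (Ne.symm h4i) (by linear_combination d30)
    have z13 : φ 1 3 = 0 := key_aux h42 (by linear_combination d13)
    have z23 : φ 2 3 = 0 := key_aux h42 (by linear_combination d23)
    have z31 : φ 3 1 = 0 := key_aux (Ne.symm h42) (by linear_combination d31)
    have z32 : φ 3 2 = 0 := key_aux (Ne.symm h42) (by linear_combination d32)
    have hφ : φ = Mmat (φ 3 3) (φ 0 0) (φ 1 2) (φ 2 1) (φ 2 2) (φ 1 1) := by
      ext i j
      fin_cases i <;> fin_cases j <;>
        simp [Mmat, Matrix.vecHead, Matrix.vecTail, z01, z02, z03, z10, z20, z30, z13, z23, z31, z32]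
    rw [hφ] at hE hF
    have e1 := congrFun (congrFun hE 0) 1
    have e2 := congrFun (congrFun hE 0) 2
    have e3 := congrFun (congrFun hE 1) 3
    have e4 := congrFun (congrFun hE 2) 3
    have e5 := congrFun (congrFun hF 2) 0
    have e6 := congrFun (congrFun hF 1) 0
    have e7 := congrFun (congrFun hF 3) 1
    have e8 := congrFun (congrFun hF 3) 2
    simp [Mmat, Emat, Fmat, Matrix.mul_apply, Fin.sum_univ_four] at e1 e2 e3 e4 e5 e6 e7 e8
    refine ⟨φ 3 3, φ 0 0, φ 1 2, φ 2 1, φ 2 2, φ 1 1,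
      ⟨by linear_combination -e1, by linear_combination -e2, by linear_combination -e3,
       by linear_combination -e4, by linear_combination -e5, by linear_combination -e6,
       by linear_combination -e7, by linear_combination -e8⟩, hφ⟩
  · rintro ⟨a₁, a₂, b₁, b₂, c₁, c₂, ⟨e1, e2, e3, e4, e5, e6, e7, e8⟩, rfl⟩
    refine ⟨?_, ?_, ?_⟩
    · ext i j
      fin_cases i <;> fin_cases j <;>
        simp [Mmat, Dmat, Matrix.vecHead, Matrix.vecTail, Matrix.mul_apply,
          Fin.sum_univ_four] <;> ring
    · ext i j
      fin_cases i <;> fin_cases j <;>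
        simp [Mmat, Emat, Matrix.vecHead, Matrix.vecTail, Matrix.mul_apply,
          Fin.sum_univ_four] <;>
        first
          | ring1
          | linear_combination e1 | linear_combination -e1
          | linear_combination e2 | linear_combination -e2
          | linear_combination e3 | linear_combination -e3
          | linear_combination e4 | linear_combination -e4
    · ext i j
      fin_cases i <;> fin_cases j <;>
        simp [Mmat, Fmat, Matrix.vecHead, Matrix.vecTail, Matrix.mul_apply,
          Fin.sum_univ_four] <;>
        first
          | ring1
          | linear_combination e5 | linear_combination -e5
          | linear_combination e6 | linear_combination -e6
          | linear_combination e7 | linear_combination -e7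
          | linear_combination e8 | linear_combination -e8
end

section
/- Let q ∈ ℂ with q ≠ 0 and q⁴ ≠ 1, and let ζ, ζ' ∈ ℂ× with ζ, ζ' ∉ {1, −1}. Set r := (−ζζ', 1, ζ', ζ, 1−ζ², 0) and r' := (1, −ζζ', −ζ, −ζ', 0, 1−(ζ')²) in ℂ⁶. Then the set of tuples (a₁,a₂,b₁,b₂,c₁,c₂) ∈ ℂ⁶ satisfying the intertwining system is exactly the linear span of r and r', and r, r' are linearly independent; in particular this solution space is two-dimensional. -/
open Matrix

/-- The tuple `(a₁,a₂,b₁,b₂,c₁,c₂)` of matrix coefficients of the R-matrix `R`. -/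
def rvec (ζ ζ' : ℂ) : Fin 6 → ℂ := ![-(ζ * ζ'), 1, ζ', ζ, 1 - ζ ^ 2, 0]

/-- The tuple `(a₁,a₂,b₁,b₂,c₁,c₂)` of matrix coefficients of the R-matrix `R'`. -/
def rvec' (ζ ζ' : ℂ) : Fin 6 → ℂ := ![1, -(ζ * ζ'), -ζ, -ζ', 0, 1 - ζ' ^ 2]

set_option maxHeartbeats 1000000 in
theorem stmt2 (q ζ ζ' : ℂ) (hq0 : q ≠ 0) (hq4 : q ^ 4 ≠ 1)
    (hζ0 : ζ ≠ 0) (hζ'0 : ζ' ≠ 0)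
    (hζ1 : ζ ≠ 1) (hζm1 : ζ ≠ -1) (hζ'1 : ζ' ≠ 1) (hζ'm1 : ζ' ≠ -1) :
    {x : Fin 6 → ℂ | IntSys q ζ ζ' (x 0) (x 1) (x 2) (x 3) (x 4) (x 5)} =
      (Submodule.span ℂ {rvec ζ ζ', rvec' ζ ζ'} : Submodule ℂ (Fin 6 → ℂ)) ∧
    LinearIndependent ℂ ![rvec ζ ζ', rvec' ζ ζ'] ∧
    Module.finrank ℂ (Submodule.span ℂ {rvec ζ ζ', rvec' ζ ζ'} : Submodule ℂ (Fin 6 → ℂ)) = 2 := by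
  have hq2 : q * q - 1 ≠ 0 := by
    intro h
    apply hq4
    have h1 : q * q = 1 := by linear_combination h
    calc q ^ 4 = (q*q)*(q*q) := by ring
    _ = 1 := by rw [h1]; ring
  have hd : q - 1/q ≠ 0 := by
    intro h
    apply hq2
    have := congrArg (· * q) h
    field_simp at this
    linear_combination this
  have hs2 : 1 - ζ ^ 2 ≠ 0 := by
    intro h
    rcases mul_eq_zero.mp (show (1 - ζ) * (1 + ζ) = 0 by linear_combination h) with h' | h'
    · exact hζ1 (by linear_combination -h')
    · exact hζm1 (by linear_combination h')
  have ht2 : 1 - ζ' ^ 2 ≠ 0 := by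
    intro h
    rcases mul_eq_zero.mp (show (1 - ζ') * (1 + ζ') = 0 by linear_combination h) with h' | h'
    · exact hζ'1 (by linear_combination -h')
    · exact hζ'm1 (by linear_combination h')
  refine ⟨?_, ?_, ?_⟩
  · ext x
    simp only [Set.mem_setOf_eq, SetLike.mem_coe, Submodule.mem_span_pair, IntSys]
    constructor
    · rintro ⟨h1, h2, h3, h4, h5, h6, h7, h8⟩
      clear h2 h3 h4 h6
      simp only [qbr] at h1
      field_simp [hd, show q ^ 2 - 1 ≠ 0 by intro h; exact hq2 (by linear_combination h)] at h1
      have H1 : (ζ*ζ-1)*ζ' * x 5 + (ζ'*ζ'-1) * x 3 = (ζ'*ζ'-1)*ζ * x 1 := by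
        apply mul_left_cancel₀
          (mul_ne_zero (mul_ne_zero (mul_ne_zero hζ0 hζ'0) hq0) (pow_ne_zero 2 hq2))
        linear_combination (ζ*ζ'*q*(q*q-1)^2) * h1
      have K3 : (1-ζ^2)*(1-ζ'^2) * x 3 = ζ*(1-ζ'^2) * x 4 - ζ'*(1-ζ^2) * x 5 := by
        linear_combination -H1 - ζ*(ζ'^2-1)*h5
      refine ⟨x 4 / (1 - ζ ^ 2), x 5 / (1 - ζ' ^ 2), ?_⟩
      have g0 : x 4 / (1 - ζ^2) * (-(ζ * ζ')) + x 5 / (1 - ζ'^2) * 1 = x 0 := by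
        field_simp
        linear_combination (1-ζ^2)*(1-ζ'^2)*h7 + ζ'*K3
      have g1 : x 4 / (1 - ζ^2) * 1 + x 5 / (1 - ζ'^2) * (-(ζ * ζ')) = x 1 := by
        field_simp
        linear_combination -(1-ζ^2)*(1-ζ'^2)*h5 - ζ*K3
      have g2 : x 4 / (1 - ζ^2) * ζ' + x 5 / (1 - ζ'^2) * (-ζ) = x 2 := by
        field_simp
        linear_combination -(1-ζ^2)*(1-ζ'^2)*h8 - ζ*((1-ζ^2)*(1-ζ'^2)*h7 + ζ'*K3)
      have g3 : x 4 / (1 - ζ^2) * ζ + x 5 / (1 - ζ'^2) * (-ζ') = x 3 := by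
        field_simp
        linear_combination -K3
      have g4 : x 4 / (1 - ζ^2) * (1 - ζ^2) + x 5 / (1 - ζ'^2) * 0 = x 4 := by
        field_simp
        ring
      have g5 : x 4 / (1 - ζ^2) * 0 + x 5 / (1 - ζ'^2) * (1 - ζ'^2) = x 5 := by
        field_simp
        ring
      funext i
      fin_cases i
      · exact g0
      · exact g1
      · exact g2
      · exact g3
      · exact g4
      · exact g5
    · rintro ⟨m, n, rfl⟩
      have c0 : ∀ (a b c d e f : ℂ), ![a,b,c,d,e,f] 0 = a := fun _ _ _ _ _ _ => rfl
      have c1 : ∀ (a b c d e f : ℂ), ![a,b,c,d,e,f] 1 = b := fun _ _ _ _ _ _ => rfl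
      have c2 : ∀ (a b c d e f : ℂ), ![a,b,c,d,e,f] 2 = c := fun _ _ _ _ _ _ => rfl
      have c3 : ∀ (a b c d e f : ℂ), ![a,b,c,d,e,f] 3 = d := fun _ _ _ _ _ _ => rfl
      have c4 : ∀ (a b c d e f : ℂ), ![a,b,c,d,e,f] 4 = e := fun _ _ _ _ _ _ => rfl
      have c5 : ∀ (a b c d e f : ℂ), ![a,b,c,d,e,f] 5 = f := fun _ _ _ _ _ _ => rfl
      simp only [rvec, rvec', Pi.add_apply, Pi.smul_apply, smul_eq_mul,
        c0, c1, c2, c3, c4, c5]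
      refine ⟨?_, ?_, ?_, ?_, ?_, ?_, ?_, ?_⟩ <;>
        first
          | ring1
          | (simp only [qbr, div_eq_mul_inv]
             generalize (q - q⁻¹)⁻¹ = D
             field_simp
             ring1)
  · rw [linearIndependent_fin2]
    constructor
    · intro h
      have h5 := congrFun h 5
      simp only [rvec', Pi.zero_apply, Matrix.cons_val_fin_one] at h5
      exact ht2 (by simpa [rvec'] using h5)
    · intro a h
      have h4 := congrFun h 4
      simp only [rvec, rvec', Pi.smul_apply, smul_eq_mul] at h4
      apply hs2
      simpa [rvec, rvec'] using h4.symm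
  · have hr : ({rvec ζ ζ', rvec' ζ ζ'} : Set (Fin 6 → ℂ)) = Set.range ![rvec ζ ζ', rvec' ζ ζ'] := by
      ext v
      simp [Fin.exists_fin_two, or_comm]
    rw [hr, finrank_span_eq_card]
    · simp
    · rw [linearIndependent_fin2]
      constructor
      · intro h
        have h5 := congrFun h 5
        exact ht2 (by simpa [rvec'] using h5)
      · intro a h
        have h4 := congrFun h 4
        simp only [rvec, rvec', Pi.smul_apply, smul_eq_mul] at h4
        apply hs2
        simpa [rvec, rvec'] using h4.symm
end

section
/- Let q ∈ ℂ with q ∉ {0, 1, −1}, and let ζ, ζ' ∈ ℂ× with ζ, ζ', ζζ' ∉ {1, −1}. Let φ be an endomorphism of ℂ²⊗ℂ² of the grading-preserving form φ(e₀⊗e₀) = a₂ e₀⊗e₀ + d₁ e₁⊗e₁, φ(e₀⊗e₁) = c₂ e₀⊗e₁ + b₂ e₁⊗e₀, φ(e₁⊗e₀) = b₁ e₀⊗e₁ + c₁ e₁⊗e₀, φ(e₁⊗e₁) = d₂ e₀⊗e₀ + a₁ e₁⊗e₁ for some complex numbers a₁, a₂, b₁, b₂, c₁, c₂, d₁, d₂.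 If φ∘E(ζ,ζ') = E(ζ',ζ)∘φ and φ∘F(ζ,ζ') = F(ζ',ζ)∘φ, then d₁ = d₂ = 0 and there exist u, v ∈ ℂ with φ = u·R(ζ,ζ') + v·R'(ζ,ζ'). -/
open Matrix

/-- The R-matrix `R(ζ,ζ')`. -/
def Rmat (ζ ζ' : ℂ) : Matrix (Fin 4) (Fin 4) ℂ :=
  Mmat (-(ζ * ζ')) 1 ζ' ζ (1 - ζ ^ 2) 0

/-- The R-matrix `R'(ζ,ζ')`. -/
def Rmat' (ζ ζ' : ℂ) : Matrix (Fin 4) (Fin 4) ℂ :=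
  Mmat 1 (-(ζ * ζ')) (-ζ) (-ζ') 0 (1 - ζ' ^ 2)

set_option maxHeartbeats 1000000 in
theorem stmt3 (q ζ ζ' : ℂ) (hq0 : q ≠ 0) (hq1 : q ≠ 1) (hqm1 : q ≠ -1)
    (hζ0 : ζ ≠ 0) (hζ'0 : ζ' ≠ 0)
    (hζ1 : ζ ≠ 1) (hζm1 : ζ ≠ -1) (hζ'1 : ζ' ≠ 1) (hζ'm1 : ζ' ≠ -1)
    (hζζ'1 : ζ * ζ' ≠ 1) (hζζ'm1 : ζ * ζ' ≠ -1)
    (a₁ a₂ b₁ b₂ c₁ c₂ d₁ d₂ : ℂ)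
    (φ : Matrix (Fin 4) (Fin 4) ℂ)
    (hφ : φ = !![a₂, 0,  0,  d₂;
                 0,  c₂, b₁, 0;
                 0,  b₂, c₁, 0;
                 d₁, 0,  0,  a₁])
    (hE : φ * Emat q ζ ζ' = Emat q ζ' ζ * φ)
    (hF : φ * Fmat ζ ζ' = Fmat ζ' ζ * φ) :
    d₁ = 0 ∧ d₂ = 0 ∧ ∃ u v : ℂ, φ = u • Rmat ζ ζ' + v • Rmat' ζ ζ' := by

  subst hφ
  have e01 := congrFun (congrFun hE 0) 1
  have e31 := congrFun (congrFun hE 3) 1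
  have f01 := congrFun (congrFun hF 0) 1
  have f10 := congrFun (congrFun hF 1) 0
  have f20 := congrFun (congrFun hF 2) 0
  have f31 := congrFun (congrFun hF 3) 1
  simp [Matrix.mul_apply, Fin.sum_univ_four, Emat, Fmat, qbr, Matrix.vecHead,
    Matrix.vecTail] at e01 e31 f01 f10 f20 f31
  have hqq : q * q - 1 ≠ 0 := fun h => by
    rcases mul_eq_zero.mp (show (q-1)*(q+1) = 0 by linear_combination h) with h1 | h1
    · exact hq1 (by linear_combination h1)
    · exact hqm1 (by linear_combination h1)
  have hx : ζ * ζ - 1 ≠ 0 := fun h => by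
    rcases mul_eq_zero.mp (show (ζ-1)*(ζ+1) = 0 by linear_combination h) with h1 | h1
    · exact hζ1 (by linear_combination h1)
    · exact hζm1 (by linear_combination h1)
  have hy : ζ' * ζ' - 1 ≠ 0 := fun h => by
    rcases mul_eq_zero.mp (show (ζ'-1)*(ζ'+1) = 0 by linear_combination h) with h1 | h1
    · exact hζ'1 (by linear_combination h1)
    · exact hζ'm1 (by linear_combination h1)
  have hx' : (1:ℂ) - ζ ^ 2 ≠ 0 := fun h => hx (by linear_combination -h)
  have hy' : (1:ℂ) - ζ' ^ 2 ≠ 0 := fun h => hy (by linear_combination -h)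
  field_simp at e01 e31
  -- d₁ = 0
  have hd1 : d₁ = 0 := by
    rcases e31 with h | h | h
    · exact h
    · exact absurd (by linear_combination h) hy
    · exact absurd (by linear_combination h) hqq
  -- clean form of the E-equation at entry (0,1)
  have E1 : ζ * (ζ' * ζ' - 1) * a₂ = ζ' * (ζ * ζ - 1) * c₂ + (ζ' * ζ' - 1) * b₂ := by
    apply mul_left_cancel₀ (mul_ne_zero (mul_ne_zero (mul_ne_zero hq0 hqq) hqq)
      (mul_ne_zero hζ0 hζ'0) : q * (q * q - 1) * (q * q - 1) * (ζ * ζ') ≠ 0)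
    linear_combination q * (q * q - 1) * (q * q - 1) * ζ * ζ' * (div_left_inj' (fun h => hqq (by linear_combination h) : q ^ 2 - 1 ≠ 0)).mp e01
  -- key derived identities
  have Hb2 : b₂ * ((ζ * ζ - 1) * (ζ' * ζ' - 1)) =
      ζ' * (ζ * ζ - 1) * c₂ - ζ * (ζ' * ζ' - 1) * c₁ := by
    linear_combination E1 + ζ * (ζ' * ζ' - 1) * f20
  have Ha2 : a₂ * ((ζ * ζ - 1) * (ζ' * ζ' - 1)) =
      ζ * ζ' * (ζ * ζ - 1) * c₂ - (ζ' * ζ' - 1) * c₁ := by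
    linear_combination ζ * Hb2 - (ζ * ζ - 1) * (ζ' * ζ' - 1) * f20
  have Hb1 : b₁ * ((ζ * ζ - 1) * (ζ' * ζ' - 1)) =
      ζ * (ζ * ζ - 1) * c₂ - ζ' * (ζ' * ζ' - 1) * c₁ := by
    linear_combination ζ' * Ha2 + (ζ * ζ - 1) * (ζ' * ζ' - 1) * f10
  have Ha1 : a₁ * ((ζ * ζ - 1) * (ζ' * ζ' - 1)) =
      -((ζ * ζ - 1) * c₂) + ζ * ζ' * (ζ' * ζ' - 1) * c₁ := by
    linear_combination (ζ * ζ - 1) * (ζ' * ζ' - 1) * f31 - ζ' * Hb2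
  refine ⟨hd1, f01, c₁ / (1 - ζ ^ 2), c₂ / (1 - ζ' ^ 2), ?_⟩
  subst hd1 f01
  ext i j
  fin_cases i <;> fin_cases j <;>
    simp [Rmat, Rmat', Mmat, Matrix.vecHead, Matrix.vecTail] <;>
    field_simp <;>
    first
      | linear_combination Ha2 | linear_combination -Ha2
      | linear_combination Hb1 | linear_combination -Hb1
      | linear_combination Hb2 | linear_combination -Hb2
      | linear_combination Ha1 | linear_combination -Ha1
end

section
/- For every ζ ∈ ℂ, both A = R(ζ,ζ) and A = R'(ζ,ζ) satisfy A² + (ζ² − 1)·A − ζ²·Id = 0 on ℂ²⊗ℂ²; moreover the characteristic polynomial of each of R(ζ,ζ) and R'(ζ,ζ) is (X − 1)²(X + ζ²)², so each has eigenvalues 1 and −ζ², each with multiplicity 2. -/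
open Matrix

theorem det_fin_four' {R : Type*} [CommRing R] (A : Matrix (Fin 4) (Fin 4) R) :
    A.det =
      A 0 0 * (A 1 1 * (A 2 2 * A 3 3 - A 2 3 * A 3 2) - A 1 2 * (A 2 1 * A 3 3 - A 2 3 * A 3 1) +
        A 1 3 * (A 2 1 * A 3 2 - A 2 2 * A 3 1)) -
      A 0 1 * (A 1 0 * (A 2 2 * A 3 3 - A 2 3 * A 3 2) - A 1 2 * (A 2 0 * A 3 3 - A 2 3 * A 3 0) +
        A 1 3 * (A 2 0 * A 3 2 - A 2 2 * A 3 0)) +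
      A 0 2 * (A 1 0 * (A 2 1 * A 3 3 - A 2 3 * A 3 1) - A 1 1 * (A 2 0 * A 3 3 - A 2 3 * A 3 0) +
        A 1 3 * (A 2 0 * A 3 1 - A 2 1 * A 3 0)) -
      A 0 3 * (A 1 0 * (A 2 1 * A 3 2 - A 2 2 * A 3 1) - A 1 1 * (A 2 0 * A 3 2 - A 2 2 * A 3 0) +
        A 1 2 * (A 2 0 * A 3 1 - A 2 1 * A 3 0)) := by
  rw [Matrix.det_succ_row_zero]
  simp [Fin.sum_univ_succ, Matrix.det_fin_three, Matrix.submatrix_apply, Fin.succAbove,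
    show (Fin.succ 2 : Fin 4) = 3 from rfl,
    show ((2 : Fin 3).castSucc : Fin 4) = 2 from rfl]
  ring

set_option maxHeartbeats 1000000 in
theorem stmt6 (ζ : ℂ) :
    (Rmat ζ ζ ^ 2 + (ζ ^ 2 - 1) • Rmat ζ ζ - (ζ ^ 2) • (1 : Matrix (Fin 4) (Fin 4) ℂ) = 0) ∧
    (Rmat' ζ ζ ^ 2 + (ζ ^ 2 - 1) • Rmat' ζ ζ - (ζ ^ 2) • (1 : Matrix (Fin 4) (Fin 4) ℂ) = 0) ∧
    (Rmat ζ ζ).charpoly =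
      (Polynomial.X - 1) ^ 2 * (Polynomial.X + Polynomial.C (ζ ^ 2)) ^ 2 ∧
    (Rmat' ζ ζ).charpoly =
      (Polynomial.X - 1) ^ 2 * (Polynomial.X + Polynomial.C (ζ ^ 2)) ^ 2 := by
  refine ⟨?_, ?_, ?_, ?_⟩
  · ext i j
    fin_cases i <;> fin_cases j <;>
      simp [Rmat, Mmat, pow_two, Matrix.mul_apply, Fin.sum_univ_four, Matrix.one_apply,
        Matrix.vecHead, Matrix.vecTail] <;> ring
  · ext i j
    fin_cases i <;> fin_cases j <;>
      simp [Rmat', Mmat, pow_two, Matrix.mul_apply, Fin.sum_univ_four, Matrix.one_apply,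
        Matrix.vecHead, Matrix.vecTail] <;> ring
  · rw [Matrix.charpoly, det_fin_four']
    simp [charmatrix_apply, Rmat, Mmat, Matrix.diagonal_apply, Fin.ext_iff,
      Matrix.vecHead, Matrix.vecTail, show ((3 : Fin 4) : ℕ) = 3 from rfl]
    ring
  · rw [Matrix.charpoly, det_fin_four']
    simp [charmatrix_apply, Rmat', Mmat, Matrix.diagonal_apply, Fin.ext_iff,
      Matrix.vecHead, Matrix.vecTail, show ((3 : Fin 4) : ℕ) = 3 from rfl]
    ring
end

section
/- For every ζ ∈ ℂ one has R(ζ,ζ)² + R'(ζ,ζ)² = (1 + ζ⁴) · Id on ℂ²⊗ℂ². -/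
open Matrix

set_option maxHeartbeats 2000000 in
theorem stmt7 (ζ : ℂ) :
    Rmat ζ ζ ^ 2 + Rmat' ζ ζ ^ 2 = (1 + ζ ^ 4) • (1 : Matrix (Fin 4) (Fin 4) ℂ) := by
  rw [pow_two, pow_two]
  ext i j
  fin_cases i <;> fin_cases j <;>
    simp [Rmat, Rmat', Mmat, Matrix.mul_apply, Fin.sum_univ_four, Matrix.one_apply, Matrix.vecHead, Matrix.vecTail] <;> ring_nf
end

section
/- For all u, v, ζ, ζ' ∈ ℂ, setting a₁ := v − uζζ', a₂ := u − vζζ', b₁ := uζ' − vζ, b₂ := uζ − vζ', c₁ := u(1 − ζ²), c₂ := v(1 − (ζ')²), the cubic relation b₂³ + a₁b₁c₁ + a₂b₂c₁ + a₂b₁c₂ + a₁b₂c₂ = 2a₁a₂b₁ + (a₁² + a₂² + b₁²)b₂ holds. -/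
theorem stmt9 (u v ζ ζ' : ℂ)
    (a₁ a₂ b₁ b₂ c₁ c₂ : ℂ)
    (ha₁ : a₁ = v - u * ζ * ζ') (ha₂ : a₂ = u - v * ζ * ζ')
    (hb₁ : b₁ = u * ζ' - v * ζ) (hb₂ : b₂ = u * ζ - v * ζ')
    (hc₁ : c₁ = u * (1 - ζ ^ 2)) (hc₂ : c₂ = v * (1 - ζ' ^ 2)) :
    b₂ ^ 3 + a₁ * b₁ * c₁ + a₂ * b₂ * c₁ + a₂ * b₁ * c₂ + a₁ * b₂ * c₂ =
      2 * a₁ * a₂ * b₁ + (a₁ ^ 2 + a₂ ^ 2 + b₁ ^ 2) * b₂ := by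
  subst ha₁ ha₂ hb₁ hb₂ hc₁ hc₂; ring
end

section
/- Let ζ, ζ', ζ'' ∈ ℂ× with ζ, ζ', ζ'' ∉ {1, −1}. Then the Yang–Baxter equation (R(ζ',ζ'')⊗I) ∘ (I⊗R(ζ,ζ'')) ∘ (R(ζ,ζ')⊗I) = (I⊗R(ζ,ζ')) ∘ (R(ζ,ζ'')⊗I) ∘ (I⊗R(ζ',ζ'')) holds as an identity of endomorphisms of ℂ²⊗ℂ²⊗ℂ². -/
open Matrix

/-- `A ⊗ I` : the Kronecker product of a `4×4` matrix (acting on the first two tensor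
factors of `ℂ²⊗ℂ²⊗ℂ²`) with the `2×2` identity, indexed by `Fin 8`
(basis index `i ↔ e_{i/4} ⊗ e_{(i/2)%2} ⊗ e_{i%2}`). -/
def tenL (A : Matrix (Fin 4) (Fin 4) ℂ) : Matrix (Fin 8) (Fin 8) ℂ :=
  Matrix.of fun i j =>
    A ⟨i.val / 2, by have := i.isLt; omega⟩ ⟨j.val / 2, by have := j.isLt; omega⟩ *
      (if i.val % 2 = j.val % 2 then 1 else 0)

/-- `I ⊗ A` : the Kronecker product of the `2×2` identity with a `4×4` matrix acting on
the last two tensor factors of `ℂ²⊗ℂ²⊗ℂ²`, indexed by `Fin 8`. -/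
def tenR (A : Matrix (Fin 4) (Fin 4) ℂ) : Matrix (Fin 8) (Fin 8) ℂ :=
  Matrix.of fun i j =>
    (if i.val / 4 = j.val / 4 then 1 else 0) *
      A ⟨i.val % 4, by have := i.isLt; omega⟩ ⟨j.val % 4, by have := j.isLt; omega⟩


@[simp] lemma finv0 : ((0 : Fin 8) : ℕ) = 0 := rfl
@[simp] lemma finv1 : ((1 : Fin 8) : ℕ) = 1 := rfl
@[simp] lemma finv2 : ((2 : Fin 8) : ℕ) = 2 := rfl
@[simp] lemma finv3 : ((3 : Fin 8) : ℕ) = 3 := rfl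
@[simp] lemma finv4 : ((4 : Fin 8) : ℕ) = 4 := rfl
@[simp] lemma finv5 : ((5 : Fin 8) : ℕ) = 5 := rfl
@[simp] lemma finv6 : ((6 : Fin 8) : ℕ) = 6 := rfl
@[simp] lemma finv7 : ((7 : Fin 8) : ℕ) = 7 := rfl

def Lmat8 (ζ ζ' : ℂ) : Matrix (Fin 8) (Fin 8) ℂ :=
  !![1, 0, 0, 0, 0, 0, 0, 0;
     0, 1, 0, 0, 0, 0, 0, 0;
     0, 0, 0, 0, ζ', 0, 0, 0;
     0, 0, 0, 0, 0, ζ', 0, 0;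
     0, 0, ζ, 0, 1 - ζ ^ 2, 0, 0, 0;
     0, 0, 0, ζ, 0, 1 - ζ ^ 2, 0, 0;
     0, 0, 0, 0, 0, 0, -(ζ * ζ'), 0;
     0, 0, 0, 0, 0, 0, 0, -(ζ * ζ')]

def Rmat8 (ζ ζ' : ℂ) : Matrix (Fin 8) (Fin 8) ℂ :=
  !![1, 0, 0, 0, 0, 0, 0, 0;
     0, 0, ζ', 0, 0, 0, 0, 0;
     0, ζ, 1 - ζ ^ 2, 0, 0, 0, 0, 0;
     0, 0, 0, -(ζ * ζ'), 0, 0, 0, 0;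
     0, 0, 0, 0, 1, 0, 0, 0;
     0, 0, 0, 0, 0, 0, ζ', 0;
     0, 0, 0, 0, 0, ζ, 1 - ζ ^ 2, 0;
     0, 0, 0, 0, 0, 0, 0, -(ζ * ζ')]

lemma tenL_eq (ζ ζ' : ℂ) : tenL (Rmat ζ ζ') = Lmat8 ζ ζ' := by
  ext i j
  fin_cases i <;> fin_cases j <;> norm_num [tenL, Rmat, Mmat, Lmat8]

lemma tenR_eq (ζ ζ' : ℂ) : tenR (Rmat ζ ζ') = Rmat8 ζ ζ' := by
  ext i j
  fin_cases i <;> fin_cases j <;> norm_num [tenR, Rmat, Mmat, Rmat8]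



@[simp] lemma cons_val_five {m : ℕ} {α : Type*} (x : α) (u : Fin (m + 5) → α) :
    Matrix.vecCons x u 5 = Matrix.vecHead (Matrix.vecTail (Matrix.vecTail (Matrix.vecTail (Matrix.vecTail u)))) :=
  rfl

@[simp] lemma cons_val_six {m : ℕ} {α : Type*} (x : α) (u : Fin (m + 6) → α) :
    Matrix.vecCons x u 6 = Matrix.vecHead (Matrix.vecTail (Matrix.vecTail (Matrix.vecTail (Matrix.vecTail (Matrix.vecTail u))))) :=
  rfl

@[simp] lemma cons_val_seven {m : ℕ} {α : Type*} (x : α) (u : Fin (m + 7) → α) :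
    Matrix.vecCons x u 7 = Matrix.vecHead (Matrix.vecTail (Matrix.vecTail (Matrix.vecTail (Matrix.vecTail (Matrix.vecTail (Matrix.vecTail u)))))) :=
  rfl

def Pm1 (ζ ζ' ζ'' : ℂ) : Matrix (Fin 8) (Fin 8) ℂ :=
  !![1, 0, 0, 0, 0, 0, 0, 0;
     0, 0, ζ'', 0, 0, 0, 0, 0;
     0, 0, 0, 0, ζ'', 0, 0, 0;
     0, 0, 0, 0, 0, 0, ζ'' ^ 2, 0;
     0, ζ * ζ', ζ' - ζ ^ 2 * ζ', 0, 1 - ζ' ^ 2, 0, 0, 0;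
     0, 0, 0, - ζ * ζ' * ζ'', 0, 0, ζ'' - ζ' ^ 2 * ζ'', 0;
     0, 0, 0, 0, 0, - ζ * ζ' * ζ'', - ζ' * ζ'' + ζ ^ 2 * ζ' * ζ'', 0;
     0, 0, 0, 0, 0, 0, 0, ζ * ζ' * ζ'' ^ 2]

def Pm2 (ζ ζ' ζ'' : ℂ) : Matrix (Fin 8) (Fin 8) ℂ :=
  !![1, 0, 0, 0, 0, 0, 0, 0;
     0, 0, 0, 0, ζ' * ζ'', 0, 0, 0;
     0, ζ, 0, 0, ζ'' - ζ ^ 2 * ζ'', 0, 0, 0;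
     0, 0, 0, 0, 0, - ζ * ζ' * ζ'', 0, 0;
     0, 0, ζ, 0, 1 - ζ ^ 2, 0, 0, 0;
     0, 0, 0, 0, 0, 0, - ζ * ζ' * ζ'', 0;
     0, 0, 0, ζ ^ 2, 0, ζ - ζ ^ 3, - ζ * ζ'' + ζ ^ 3 * ζ'', 0;
     0, 0, 0, 0, 0, 0, 0, ζ ^ 2 * ζ' * ζ'']

def Qm (ζ ζ' ζ'' : ℂ) : Matrix (Fin 8) (Fin 8) ℂ :=
  !![1, 0, 0, 0, 0, 0, 0, 0;
     0, 0, 0, 0, ζ' * ζ'', 0, 0, 0;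
     0, 0, ζ * ζ'', 0, ζ'' - ζ ^ 2 * ζ'', 0, 0, 0;
     0, 0, 0, 0, 0, 0, - ζ * ζ' * ζ'' ^ 2, 0;
     0, ζ * ζ', ζ - ζ * ζ' ^ 2, 0, 1 - ζ ^ 2, 0, 0, 0;
     0, 0, 0, 0, 0, - ζ * ζ' ^ 2 * ζ'', - ζ * ζ' * ζ'' + ζ * ζ' ^ 3 * ζ'', 0;
     0, 0, 0, - ζ ^ 2 * ζ' * ζ'', 0, - ζ * ζ' * ζ'' + ζ ^ 3 * ζ' * ζ'', ζ * ζ' ^ 2 * ζ'' - ζ ^ 3 * ζ' ^ 2 * ζ'', 0;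
     0, 0, 0, 0, 0, 0, 0, - ζ ^ 2 * ζ' ^ 2 * ζ'' ^ 2]

set_option maxHeartbeats 1000000 in
lemma mul1 (ζ ζ' ζ'' : ℂ) : Lmat8 ζ' ζ'' * Rmat8 ζ ζ'' = Pm1 ζ ζ' ζ'' := by
  ext i j
  fin_cases i <;> fin_cases j <;>
    simp [Lmat8, Rmat8, Pm1, Matrix.mul_apply, Fin.sum_univ_eight, Matrix.vecHead, Matrix.vecTail] <;> ring

set_option maxHeartbeats 1000000 in
lemma mul2 (ζ ζ' ζ'' : ℂ) : Pm1 ζ ζ' ζ'' * Lmat8 ζ ζ' = Qm ζ ζ' ζ'' := by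
  ext i j
  fin_cases i <;> fin_cases j <;>
    simp [Lmat8, Pm1, Qm, Matrix.mul_apply, Fin.sum_univ_eight, Matrix.vecHead, Matrix.vecTail] <;> ring

set_option maxHeartbeats 1000000 in
lemma mul3 (ζ ζ' ζ'' : ℂ) : Rmat8 ζ ζ' * Lmat8 ζ ζ'' = Pm2 ζ ζ' ζ'' := by
  ext i j
  fin_cases i <;> fin_cases j <;>
    simp [Lmat8, Rmat8, Pm2, Matrix.mul_apply, Fin.sum_univ_eight, Matrix.vecHead, Matrix.vecTail] <;> ring

set_option maxHeartbeats 1000000 in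
lemma mul4 (ζ ζ' ζ'' : ℂ) : Pm2 ζ ζ' ζ'' * Rmat8 ζ' ζ'' = Qm ζ ζ' ζ'' := by
  ext i j
  fin_cases i <;> fin_cases j <;>
    simp [Rmat8, Pm2, Qm, Matrix.mul_apply, Fin.sum_univ_eight, Matrix.vecHead, Matrix.vecTail] <;> ring

theorem stmt10 (ζ ζ' ζ'' : ℂ) (hζ0 : ζ ≠ 0) (hζ'0 : ζ' ≠ 0) (hζ''0 : ζ'' ≠ 0)
    (hζ1 : ζ ≠ 1) (hζm1 : ζ ≠ -1) (hζ'1 : ζ' ≠ 1) (hζ'm1 : ζ' ≠ -1)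
    (hζ''1 : ζ'' ≠ 1) (hζ''m1 : ζ'' ≠ -1) :
    tenL (Rmat ζ' ζ'') * tenR (Rmat ζ ζ'') * tenL (Rmat ζ ζ') =
      tenR (Rmat ζ ζ') * tenL (Rmat ζ ζ'') * tenR (Rmat ζ' ζ'') := by
  simp only [tenL_eq, tenR_eq]
  rw [mul1, mul2, mul3, mul4]
end

section
/- Let ζ, ζ', ζ'' ∈ ℂ× with ζ, ζ', ζ'' ∉ {1, −1}. Then the Yang–Baxter equation (R'(ζ',ζ'')⊗I) ∘ (I⊗R'(ζ,ζ'')) ∘ (R'(ζ,ζ')⊗I) = (I⊗R'(ζ,ζ')) ∘ (R'(ζ,ζ'')⊗I) ∘ (I⊗R'(ζ',ζ'')) holds as an identity of endomorphisms of ℂ²⊗ℂ²⊗ℂ². -/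
open Matrix

@[simp] lemma my_cons_val_five {α : Type*} {m : ℕ} (x : α)
    (u : Fin m.succ.succ.succ.succ.succ → α) :
    vecCons x u 5 = vecHead (vecTail (vecTail (vecTail (vecTail u)))) := rfl

@[simp] lemma my_cons_val_six {α : Type*} {m : ℕ} (x : α)
    (u : Fin m.succ.succ.succ.succ.succ.succ → α) :
    vecCons x u 6 = vecHead (vecTail (vecTail (vecTail (vecTail (vecTail u))))) := rfl

@[simp] lemma my_cons_val_seven {α : Type*} {m : ℕ} (x : α)
    (u : Fin m.succ.succ.succ.succ.succ.succ.succ → α) :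
    vecCons x u 7 = vecHead (vecTail (vecTail (vecTail (vecTail (vecTail (vecTail u)))))) := rfl

set_option maxHeartbeats 1000000 in
lemma tenL_Mmat (a₁ a₂ b₁ b₂ c₁ c₂ : ℂ) :
    tenL (Mmat a₁ a₂ b₁ b₂ c₁ c₂) =
    !![a₂, 0, 0, 0, 0, 0, 0, 0;
       0, a₂, 0, 0, 0, 0, 0, 0;
       0, 0, c₂, 0, b₁, 0, 0, 0;
       0, 0, 0, c₂, 0, b₁, 0, 0;
       0, 0, b₂, 0, c₁, 0, 0, 0;
       0, 0, 0, b₂, 0, c₁, 0, 0;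
       0, 0, 0, 0, 0, 0, a₁, 0;
       0, 0, 0, 0, 0, 0, 0, a₁] := by
  ext i j
  fin_cases i <;> fin_cases j <;>
    simp [tenL, Mmat, Matrix.vecHead, Matrix.vecTail, show (((0:Fin 8)):ℕ) = 0 from rfl, show (((1:Fin 8)):ℕ) = 1 from rfl, show (((2:Fin 8)):ℕ) = 2 from rfl, show (((3:Fin 8)):ℕ) = 3 from rfl, show (((4:Fin 8)):ℕ) = 4 from rfl, show (((5:Fin 8)):ℕ) = 5 from rfl, show (((6:Fin 8)):ℕ) = 6 from rfl, show (((7:Fin 8)):ℕ) = 7 from rfl]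

set_option maxHeartbeats 1000000 in
lemma tenR_Mmat (a₁ a₂ b₁ b₂ c₁ c₂ : ℂ) :
    tenR (Mmat a₁ a₂ b₁ b₂ c₁ c₂) =
    !![a₂, 0, 0, 0, 0, 0, 0, 0;
       0, c₂, b₁, 0, 0, 0, 0, 0;
       0, b₂, c₁, 0, 0, 0, 0, 0;
       0, 0, 0, a₁, 0, 0, 0, 0;
       0, 0, 0, 0, a₂, 0, 0, 0;
       0, 0, 0, 0, 0, c₂, b₁, 0;
       0, 0, 0, 0, 0, b₂, c₁, 0;
       0, 0, 0, 0, 0, 0, 0, a₁] := by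
  ext i j
  fin_cases i <;> fin_cases j <;>
    simp [tenR, Mmat, Matrix.vecHead, Matrix.vecTail, show (((0:Fin 8)):ℕ) = 0 from rfl, show (((1:Fin 8)):ℕ) = 1 from rfl, show (((2:Fin 8)):ℕ) = 2 from rfl, show (((3:Fin 8)):ℕ) = 3 from rfl, show (((4:Fin 8)):ℕ) = 4 from rfl, show (((5:Fin 8)):ℕ) = 5 from rfl, show (((6:Fin 8)):ℕ) = 6 from rfl, show (((7:Fin 8)):ℕ) = 7 from rfl]

set_option maxHeartbeats 1000000 in
lemma prodAB (ζ ζ' ζ'' : ℂ) :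
    (!![-(ζ' * ζ''), 0, 0, 0, 0, 0, 0, 0;
       0, -(ζ' * ζ''), 0, 0, 0, 0, 0, 0;
       0, 0, 1 - ζ'' ^ 2, 0, -ζ', 0, 0, 0;
       0, 0, 0, 1 - ζ'' ^ 2, 0, -ζ', 0, 0;
       0, 0, -ζ'', 0, 0, 0, 0, 0;
       0, 0, 0, -ζ'', 0, 0, 0, 0;
       0, 0, 0, 0, 0, 0, 1, 0;
       0, 0, 0, 0, 0, 0, 0, 1] : Matrix (Fin 8) (Fin 8) ℂ) *
    !![-(ζ * ζ''), 0, 0, 0, 0, 0, 0, 0;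
       0, 1 - ζ'' ^ 2, -ζ, 0, 0, 0, 0, 0;
       0, -ζ'', 0, 0, 0, 0, 0, 0;
       0, 0, 0, 1, 0, 0, 0, 0;
       0, 0, 0, 0, -(ζ * ζ''), 0, 0, 0;
       0, 0, 0, 0, 0, 1 - ζ'' ^ 2, -ζ, 0;
       0, 0, 0, 0, 0, -ζ'', 0, 0;
       0, 0, 0, 0, 0, 0, 0, 1] =
    !![ζ*ζ'*ζ''^2, 0, 0, 0, 0, 0, 0, 0;
       0, (-ζ'*ζ'' + ζ'*ζ''^3), ζ*ζ'*ζ'', 0, 0, 0, 0, 0;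
       0, (-ζ'' + ζ''^3), 0, 0, ζ*ζ'*ζ'', 0, 0, 0;
       0, 0, 0, (1 - ζ''^2), 0, (-ζ' + ζ'*ζ''^2), ζ*ζ', 0;
       0, ζ''^2, 0, 0, 0, 0, 0, 0;
       0, 0, 0, -ζ'', 0, 0, 0, 0;
       0, 0, 0, 0, 0, -ζ'', 0, 0;
       0, 0, 0, 0, 0, 0, 0, 1] := by
  ext i j
  fin_cases i <;> fin_cases j <;>
    simp [Matrix.mul_apply, Fin.sum_univ_eight, Matrix.vecHead, Matrix.vecTail] <;>
    ring

set_option maxHeartbeats 1000000 in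
lemma prodABC (ζ ζ' ζ'' : ℂ) :
    (!![ζ*ζ'*ζ''^2, 0, 0, 0, 0, 0, 0, 0;
       0, (-ζ'*ζ'' + ζ'*ζ''^3), ζ*ζ'*ζ'', 0, 0, 0, 0, 0;
       0, (-ζ'' + ζ''^3), 0, 0, ζ*ζ'*ζ'', 0, 0, 0;
       0, 0, 0, (1 - ζ''^2), 0, (-ζ' + ζ'*ζ''^2), ζ*ζ', 0;
       0, ζ''^2, 0, 0, 0, 0, 0, 0;
       0, 0, 0, -ζ'', 0, 0, 0, 0;
       0, 0, 0, 0, 0, -ζ'', 0, 0;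
       0, 0, 0, 0, 0, 0, 0, 1] : Matrix (Fin 8) (Fin 8) ℂ) *
    !![-(ζ * ζ'), 0, 0, 0, 0, 0, 0, 0;
       0, -(ζ * ζ'), 0, 0, 0, 0, 0, 0;
       0, 0, 1 - ζ' ^ 2, 0, -ζ, 0, 0, 0;
       0, 0, 0, 1 - ζ' ^ 2, 0, -ζ, 0, 0;
       0, 0, -ζ', 0, 0, 0, 0, 0;
       0, 0, 0, -ζ', 0, 0, 0, 0;
       0, 0, 0, 0, 0, 0, 1, 0;
       0, 0, 0, 0, 0, 0, 0, 1] =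
    !![-ζ^2*ζ'^2*ζ''^2, 0, 0, 0, 0, 0, 0, 0;
       0, (ζ*ζ'^2*ζ'' - ζ*ζ'^2*ζ''^3), (ζ*ζ'*ζ'' - ζ*ζ'^3*ζ''), 0, -ζ^2*ζ'*ζ'', 0, 0, 0;
       0, (ζ*ζ'*ζ'' - ζ*ζ'*ζ''^3), -ζ*ζ'^2*ζ'', 0, 0, 0, 0, 0;
       0, 0, 0, (1 - ζ''^2), 0, (-ζ + ζ*ζ''^2), ζ*ζ', 0;
       0, -ζ*ζ'*ζ''^2, 0, 0, 0, 0, 0, 0;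
       0, 0, 0, (-ζ'' + ζ'^2*ζ''), 0, ζ*ζ'', 0, 0;
       0, 0, 0, ζ'*ζ'', 0, 0, 0, 0;
       0, 0, 0, 0, 0, 0, 0, 1] := by
  ext i j
  fin_cases i <;> fin_cases j <;>
    simp [Matrix.mul_apply, Fin.sum_univ_eight, Matrix.vecHead, Matrix.vecTail] <;>
    ring

set_option maxHeartbeats 1000000 in
lemma prodDE (ζ ζ' ζ'' : ℂ) :
    (!![-(ζ * ζ'), 0, 0, 0, 0, 0, 0, 0;
       0, 1 - ζ' ^ 2, -ζ, 0, 0, 0, 0, 0;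
       0, -ζ', 0, 0, 0, 0, 0, 0;
       0, 0, 0, 1, 0, 0, 0, 0;
       0, 0, 0, 0, -(ζ * ζ'), 0, 0, 0;
       0, 0, 0, 0, 0, 1 - ζ' ^ 2, -ζ, 0;
       0, 0, 0, 0, 0, -ζ', 0, 0;
       0, 0, 0, 0, 0, 0, 0, 1] : Matrix (Fin 8) (Fin 8) ℂ) *
    !![-(ζ * ζ''), 0, 0, 0, 0, 0, 0, 0;
       0, -(ζ * ζ''), 0, 0, 0, 0, 0, 0;
       0, 0, 1 - ζ'' ^ 2, 0, -ζ, 0, 0, 0;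
       0, 0, 0, 1 - ζ'' ^ 2, 0, -ζ, 0, 0;
       0, 0, -ζ'', 0, 0, 0, 0, 0;
       0, 0, 0, -ζ'', 0, 0, 0, 0;
       0, 0, 0, 0, 0, 0, 1, 0;
       0, 0, 0, 0, 0, 0, 0, 1] =
    !![ζ^2*ζ'*ζ'', 0, 0, 0, 0, 0, 0, 0;
       0, (-ζ*ζ'' + ζ*ζ'^2*ζ''), (-ζ + ζ*ζ''^2), 0, ζ^2, 0, 0, 0;
       0, ζ*ζ'*ζ'', 0, 0, 0, 0, 0, 0;
       0, 0, 0, (1 - ζ''^2), 0, -ζ, 0, 0;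
       0, 0, ζ*ζ'*ζ'', 0, 0, 0, 0, 0;
       0, 0, 0, (-ζ'' + ζ'^2*ζ''), 0, 0, -ζ, 0;
       0, 0, 0, ζ'*ζ'', 0, 0, 0, 0;
       0, 0, 0, 0, 0, 0, 0, 1] := by
  ext i j
  fin_cases i <;> fin_cases j <;>
    simp [Matrix.mul_apply, Fin.sum_univ_eight, Matrix.vecHead, Matrix.vecTail] <;>
    ring

set_option maxHeartbeats 1000000 in
lemma prodDEF (ζ ζ' ζ'' : ℂ) :
    (!![ζ^2*ζ'*ζ'', 0, 0, 0, 0, 0, 0, 0;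
       0, (-ζ*ζ'' + ζ*ζ'^2*ζ''), (-ζ + ζ*ζ''^2), 0, ζ^2, 0, 0, 0;
       0, ζ*ζ'*ζ'', 0, 0, 0, 0, 0, 0;
       0, 0, 0, (1 - ζ''^2), 0, -ζ, 0, 0;
       0, 0, ζ*ζ'*ζ'', 0, 0, 0, 0, 0;
       0, 0, 0, (-ζ'' + ζ'^2*ζ''), 0, 0, -ζ, 0;
       0, 0, 0, ζ'*ζ'', 0, 0, 0, 0;
       0, 0, 0, 0, 0, 0, 0, 1] : Matrix (Fin 8) (Fin 8) ℂ) *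
    !![-(ζ' * ζ''), 0, 0, 0, 0, 0, 0, 0;
       0, 1 - ζ'' ^ 2, -ζ', 0, 0, 0, 0, 0;
       0, -ζ'', 0, 0, 0, 0, 0, 0;
       0, 0, 0, 1, 0, 0, 0, 0;
       0, 0, 0, 0, -(ζ' * ζ''), 0, 0, 0;
       0, 0, 0, 0, 0, 1 - ζ'' ^ 2, -ζ', 0;
       0, 0, 0, 0, 0, -ζ'', 0, 0;
       0, 0, 0, 0, 0, 0, 0, 1] =
    !![-ζ^2*ζ'^2*ζ''^2, 0, 0, 0, 0, 0, 0, 0;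
       0, (ζ*ζ'^2*ζ'' - ζ*ζ'^2*ζ''^3), (ζ*ζ'*ζ'' - ζ*ζ'^3*ζ''), 0, -ζ^2*ζ'*ζ'', 0, 0, 0;
       0, (ζ*ζ'*ζ'' - ζ*ζ'*ζ''^3), -ζ*ζ'^2*ζ'', 0, 0, 0, 0, 0;
       0, 0, 0, (1 - ζ''^2), 0, (-ζ + ζ*ζ''^2), ζ*ζ', 0;
       0, -ζ*ζ'*ζ''^2, 0, 0, 0, 0, 0, 0;
       0, 0, 0, (-ζ'' + ζ'^2*ζ''), 0, ζ*ζ'', 0, 0;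
       0, 0, 0, ζ'*ζ'', 0, 0, 0, 0;
       0, 0, 0, 0, 0, 0, 0, 1] := by
  ext i j
  fin_cases i <;> fin_cases j <;>
    simp [Matrix.mul_apply, Fin.sum_univ_eight, Matrix.vecHead, Matrix.vecTail] <;>
    ring

theorem stmt11 (ζ ζ' ζ'' : ℂ) (hζ0 : ζ ≠ 0) (hζ'0 : ζ' ≠ 0) (hζ''0 : ζ'' ≠ 0)
    (hζ1 : ζ ≠ 1) (hζm1 : ζ ≠ -1) (hζ'1 : ζ' ≠ 1) (hζ'm1 : ζ' ≠ -1)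
    (hζ''1 : ζ'' ≠ 1) (hζ''m1 : ζ'' ≠ -1) :
    tenL (Rmat' ζ' ζ'') * tenR (Rmat' ζ ζ'') * tenL (Rmat' ζ ζ') =
      tenR (Rmat' ζ ζ') * tenL (Rmat' ζ ζ'') * tenR (Rmat' ζ' ζ'') := by
  simp only [Rmat', tenL_Mmat, tenR_Mmat]
  rw [prodAB, prodABC, prodDE, prodDEF]
end

section
/- Let q ∈ ℂ× and z₁, z₂ ∈ ℂ. Then the following four identities hold: z₁·R(q,q) + z₂·R'(q,q) = R_{ΓΓ}(z₁,z₂); (−q²z₁)·R(−q⁻¹,−q⁻¹) + (−q²z₂)·R'(−q⁻¹,−q⁻¹) = R_{ΔΔ}(z₁,z₂); z₁·R(q,−q⁻¹) + (−q²z₂)·R'(q,−q⁻¹) = R_{ΓΔ}(z₁,z₂); (−q²z₁)·R(−q⁻¹,q) + z₂·R'(−q⁻¹,q) = R_{ΔΓ}(z₁,z₂). That is, the baxterized R-matrices α·R(ζ,ζ') + β·R'(ζ,ζ') specialize to all four families of R-vertex weights of Tokuyama ice (deformation parameter v = q²). -/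
open Matrix

/-- Γ Tokuyama T-weights (deformation parameter `v = q²`). -/
noncomputable def TG (q z : ℂ) : Matrix (Fin 4) (Fin 4) ℂ :=
  Mmat 1 z (-q) (q * z) ((1 - q ^ 2) * z) 1

/-- Δ Tokuyama T-weights (deformation parameter `v = q²`). -/
noncomputable def TD (q z : ℂ) : Matrix (Fin 4) (Fin 4) ℂ :=
  Mmat 1 (-(q ^ 2 * z)) q⁻¹ (q * z) ((1 - q ^ 2) * z) 1

/-- ΓΓ Tokuyama R-weights. -/
noncomputable def RGG (q z₁ z₂ : ℂ) : Matrix (Fin 4) (Fin 4) ℂ :=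
  Mmat (z₂ - q ^ 2 * z₁) (z₁ - q ^ 2 * z₂) (q * (z₁ - z₂)) (q * (z₁ - z₂))
    ((1 - q ^ 2) * z₁) ((1 - q ^ 2) * z₂)

/-- ΔΔ Tokuyama R-weights. -/
noncomputable def RDD (q z₁ z₂ : ℂ) : Matrix (Fin 4) (Fin 4) ℂ :=
  Mmat (z₁ - q ^ 2 * z₂) (z₂ - q ^ 2 * z₁) (q * (z₁ - z₂)) (q * (z₁ - z₂))
    ((1 - q ^ 2) * z₁) ((1 - q ^ 2) * z₂)

/-- ΓΔ Tokuyama R-weights. -/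
noncomputable def RGD (q z₁ z₂ : ℂ) : Matrix (Fin 4) (Fin 4) ℂ :=
  Mmat (z₁ - q ^ 2 * z₂) (z₁ - q ^ 2 * z₂) (q⁻¹ * (q ^ 4 * z₂ - z₁)) (q * (z₁ - z₂))
    ((1 - q ^ 2) * z₁) ((1 - q ^ 2) * z₂)

/-- ΔΓ Tokuyama R-weights. -/
noncomputable def RDG (q z₁ z₂ : ℂ) : Matrix (Fin 4) (Fin 4) ℂ :=
  Mmat (z₂ - q ^ 2 * z₁) (z₂ - q ^ 2 * z₁) (q⁻¹ * (z₂ - q ^ 4 * z₁)) (q * (z₁ - z₂))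
    ((1 - q ^ 2) * z₁) ((1 - q ^ 2) * z₂)

set_option maxHeartbeats 1000000 in
theorem stmt14 (q z₁ z₂ : ℂ) (hq : q ≠ 0) :
    z₁ • Rmat q q + z₂ • Rmat' q q = RGG q z₁ z₂ ∧
    (-(q ^ 2 * z₁)) • Rmat (-q⁻¹) (-q⁻¹) + (-(q ^ 2 * z₂)) • Rmat' (-q⁻¹) (-q⁻¹) = RDD q z₁ z₂ ∧
    z₁ • Rmat q (-q⁻¹) + (-(q ^ 2 * z₂)) • Rmat' q (-q⁻¹) = RGD q z₁ z₂ ∧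
    (-(q ^ 2 * z₁)) • Rmat (-q⁻¹) q + z₂ • Rmat' (-q⁻¹) q = RDG q z₁ z₂ := by
  refine ⟨?_, ?_, ?_, ?_⟩ <;>
  · simp only [Rmat, Rmat', RGG, RDD, RGD, RDG, Mmat]
    ext i j
    fin_cases i <;> fin_cases j <;>
      · simp only [Matrix.add_apply, Matrix.smul_apply, Matrix.cons_val', Matrix.cons_val_zero,
          Matrix.cons_val_one, Matrix.head_cons, Matrix.head_fin_const, Matrix.empty_val',
          Matrix.cons_val_fin_one, Matrix.of_apply, Matrix.vecHead, Matrix.vecTail,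
          Function.comp_apply, smul_eq_mul, Fin.mk_one, Fin.isValue, Matrix.cons_val, Fin.reduceFinMk]
        try field_simp
        try ring
end

section
/- Let q ∈ ℂ× and z₁, z₂ ∈ ℂ. For every choice of X, Y ∈ {Γ, Δ}, the RTT Yang–Baxter equation (T_Y(z₂)⊗I) ∘ (I⊗T_X(z₁)) ∘ (R_{XY}(z₁,z₂)⊗I) = (I⊗R_{XY}(z₁,z₂)) ∘ (T_X(z₁)⊗I) ∘ (I⊗T_Y(z₂)) holds as an identity of endomorphisms of ℂ²⊗ℂ²⊗ℂ² (four equations in total, one for each pair (X,Y)). -/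
open Matrix

/-- The Tokuyama T-weights indexed by type `X ∈ {Γ, Δ}` (`true = Γ`, `false = Δ`). -/
noncomputable def Ttok (q : ℂ) : Bool → ℂ → Matrix (Fin 4) (Fin 4) ℂ
  | true => TG q
  | false => TD q

/-- The Tokuyama R-weights indexed by types `X, Y ∈ {Γ, Δ}` (`true = Γ`, `false = Δ`). -/
noncomputable def Rtok (q : ℂ) : Bool → Bool → ℂ → ℂ → Matrix (Fin 4) (Fin 4) ℂ
  | true, true => RGG q
  | false, false => RDD q
  | true, false => RGD q
  | false, true => RDG q

lemma tenL_Mmat_s15 (a1 a2 b1 b2 c1 c2 : ℂ) : tenL (Mmat a1 a2 b1 b2 c1 c2) =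
  !![a2, 0, 0, 0, 0, 0, 0, 0;
     0, a2, 0, 0, 0, 0, 0, 0;
     0, 0, c2, 0, b1, 0, 0, 0;
     0, 0, 0, c2, 0, b1, 0, 0;
     0, 0, b2, 0, c1, 0, 0, 0;
     0, 0, 0, b2, 0, c1, 0, 0;
     0, 0, 0, 0, 0, 0, a1, 0;
     0, 0, 0, 0, 0, 0, 0, a1] := by
  ext i j
  fin_cases i <;> fin_cases j <;> norm_num [tenL, Mmat, Fin.val] <;> rfl

lemma tenR_Mmat_s15 (a1 a2 b1 b2 c1 c2 : ℂ) : tenR (Mmat a1 a2 b1 b2 c1 c2) =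
  !![a2, 0, 0, 0, 0, 0, 0, 0;
     0, c2, b1, 0, 0, 0, 0, 0;
     0, b2, c1, 0, 0, 0, 0, 0;
     0, 0, 0, a1, 0, 0, 0, 0;
     0, 0, 0, 0, a2, 0, 0, 0;
     0, 0, 0, 0, 0, c2, b1, 0;
     0, 0, 0, 0, 0, b2, c1, 0;
     0, 0, 0, 0, 0, 0, 0, a1] := by
  ext i j
  fin_cases i <;> fin_cases j <;> norm_num [tenR, Mmat, Fin.val] <;> rfl

lemma sum8 (f : Fin 8 → ℂ) : ∑ k, f k = f ⟨0, by omega⟩ + f ⟨1, by omega⟩ + f ⟨2, by omega⟩ +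
    f ⟨3, by omega⟩ + f ⟨4, by omega⟩ + f ⟨5, by omega⟩ + f ⟨6, by omega⟩ + f ⟨7, by omega⟩ := by
  rw [Fin.sum_univ_eight]; rfl

set_option maxHeartbeats 4000000 in
lemma ybe_GG (q z₁ z₂ : ℂ) (hq : q ≠ 0) :
    tenL (TG q z₂) * tenR (TG q z₁) * tenL (RGG q z₁ z₂) =
      tenR (RGG q z₁ z₂) * tenL (TG q z₁) * tenR (TG q z₂) := by
  rw [TG, TG, RGG, tenL_Mmat_s15, tenR_Mmat_s15, tenL_Mmat_s15, tenR_Mmat_s15, tenL_Mmat_s15, tenR_Mmat_s15]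
  ext i j
  fin_cases i <;> fin_cases j <;>
    (simp [Matrix.mul_apply, Fin.sum_univ_eight]; try ring
     try (field_simp <;> ring))

set_option maxHeartbeats 4000000 in
lemma ybe_GD (q z₁ z₂ : ℂ) (hq : q ≠ 0) :
    tenL (TD q z₂) * tenR (TG q z₁) * tenL (RGD q z₁ z₂) =
      tenR (RGD q z₁ z₂) * tenL (TG q z₁) * tenR (TD q z₂) := by
  rw [TG, TD, RGD, tenL_Mmat_s15, tenR_Mmat_s15, tenL_Mmat_s15, tenR_Mmat_s15, tenL_Mmat_s15, tenR_Mmat_s15]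
  ext i j
  fin_cases i <;> fin_cases j <;>
    (simp [Matrix.mul_apply, Fin.sum_univ_eight]; try ring
     try (field_simp <;> ring))

set_option maxHeartbeats 4000000 in
lemma ybe_DG (q z₁ z₂ : ℂ) (hq : q ≠ 0) :
    tenL (TG q z₂) * tenR (TD q z₁) * tenL (RDG q z₁ z₂) =
      tenR (RDG q z₁ z₂) * tenL (TD q z₁) * tenR (TG q z₂) := by
  rw [TG, TD, RDG, tenL_Mmat_s15, tenR_Mmat_s15, tenL_Mmat_s15, tenR_Mmat_s15, tenL_Mmat_s15, tenR_Mmat_s15]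
  ext i j
  fin_cases i <;> fin_cases j <;>
    (simp [Matrix.mul_apply, Fin.sum_univ_eight]; try ring
     try (field_simp <;> ring))

set_option maxHeartbeats 4000000 in
lemma ybe_DD (q z₁ z₂ : ℂ) (hq : q ≠ 0) :
    tenL (TD q z₂) * tenR (TD q z₁) * tenL (RDD q z₁ z₂) =
      tenR (RDD q z₁ z₂) * tenL (TD q z₁) * tenR (TD q z₂) := by
  rw [TD, TD, RDD, tenL_Mmat_s15, tenR_Mmat_s15, tenL_Mmat_s15, tenR_Mmat_s15, tenL_Mmat_s15, tenR_Mmat_s15]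
  ext i j
  fin_cases i <;> fin_cases j <;>
    (simp [Matrix.mul_apply, Fin.sum_univ_eight]; try ring
     try (field_simp <;> ring))

theorem stmt15 (q z₁ z₂ : ℂ) (hq : q ≠ 0) :
    ∀ X Y : Bool,
      tenL (Ttok q Y z₂) * tenR (Ttok q X z₁) * tenL (Rtok q X Y z₁ z₂) =
        tenR (Rtok q X Y z₁ z₂) * tenL (Ttok q X z₁) * tenR (Ttok q Y z₂) := by
  intro X Y
  cases X <;> cases Y
  · exact ybe_DD q z₁ z₂ hq
  · exact ybe_DG q z₁ z₂ hq
  · exact ybe_GD q z₁ z₂ hq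
  · exact ybe_GG q z₁ z₂ hq
end

section
/- Let q, z ∈ ℂ with q ≠ 0 and z ≠ 0. Then the matrix-valued function c ↦ (zq)·R^Γ_{c,q}((zq)⁻¹) converges, as c → 0 in ℂ, to the 4×4 matrix G(q,z) := [[−1,0,0,0],[0,−q,(1−q²)z,0],[0,1,qz,0],[0,0,0,z]]. Moreover, the matrix obtained from G(q,z) by negating its (1,1)-entry is exactly the matrix of Γ Tokuyama ice Boltzmann weights (a₁,a₂,b₁,b₂,c₁,c₂) = (1, z, −q, qz, (1−q²)z, 1) with v = q², arranged with diagonal (a₁, b₁, b₂, a₂) and with c₁ in position (2,3) and c₂ in position (3,2). -/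
open Matrix Filter

/-- The R-matrix `R^Γ_{c,q}(z)` (a change-of-variables form of the R-matrix coming from the
`U_q(ĝl(1|1))`-representation `π_{c,c⁻¹}`). -/
noncomputable def RGam (c q z : ℂ) : Matrix (Fin 4) (Fin 4) ℂ :=
  !![c - z, 0,               0,           0;
     0,     c * q⁻¹ - z * q, q⁻¹ - q,     0;
     0,     (1 - c ^ 2) * z, 1 - z * c,   0;
     0,     0,               0,           q⁻¹ - z * c * q]

/-- The limiting matrix `G(q,z)`. -/
noncomputable def Glim (q z : ℂ) : Matrix (Fin 4) (Fin 4) ℂ :=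
  !![-1, 0,  0,             0;
     0,  -q, (1 - q ^ 2) * z, 0;
     0,  1,  q * z,         0;
     0,  0,  0,             z]

/-- Negate the `(1,1)`-entry (index `(0,0)`) of a `4×4` matrix. -/
def negEntry00 (A : Matrix (Fin 4) (Fin 4) ℂ) : Matrix (Fin 4) (Fin 4) ℂ :=
  Matrix.of fun i j => if i = 0 ∧ j = 0 then -(A i j) else A i j

/-- The matrix of Γ Tokuyama ice Boltzmann weights `(a₁,a₂,b₁,b₂,c₁,c₂)`, arranged with
diagonal `(a₁, b₁, b₂, a₂)`, `c₁` in position `(2,3)` and `c₂` in position `(3,2)`. -/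
def wtMat (a₁ a₂ b₁ b₂ c₁ c₂ : ℂ) : Matrix (Fin 4) (Fin 4) ℂ :=
  !![a₁, 0,  0,  0;
     0,  b₁, c₁, 0;
     0,  c₂, b₂, 0;
     0,  0,  0,  a₂]

theorem stmt18 (q z : ℂ) (hq : q ≠ 0) (hz : z ≠ 0) :
    Tendsto (fun c : ℂ => (z * q) • RGam c q ((z * q)⁻¹)) (nhds 0) (nhds (Glim q z)) ∧
    negEntry00 (Glim q z) =
      wtMat 1 z (-q) (q * z) ((1 - q ^ 2) * z) 1 := by
  constructor
  · have hcont : Continuous (fun c : ℂ => (z * q) • RGam c q ((z * q)⁻¹)) := by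
      apply continuous_matrix
      intro i j
      simp only [RGam, Matrix.smul_apply, smul_eq_mul]
      fin_cases i <;> fin_cases j <;>
        simp [Matrix.cons_val_zero, Matrix.cons_val_one] <;> fun_prop
    have h := hcont.tendsto 0
    convert h using 2
    ext i j
    fin_cases i <;> fin_cases j <;>
      (try simp [Glim, RGam, Matrix.smul_apply, smul_eq_mul, Matrix.vecHead, Matrix.vecTail]) <;>
      (try field_simp) <;> (try ring)
  · ext i j
    fin_cases i <;> fin_cases j <;>
      simp [negEntry00, Glim, wtMat, Matrix.vecHead, Matrix.vecTail] <;>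
      exact fun h => absurd h (by decide)
end
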